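/- On a nearly Kähler manifold, Gray's identity 2⟨(∇_X r)Y, Z⟩ = ⟨r((∇_X J)Y), JZ⟩ + ⟨r(JY), (∇_X J)Z⟩ is equivalent to the statement that r is parallel with respect to the canonical Hermitian connection: ∇̄ r = 0. -/
import Mathlib


/-
Vector-field model of a nearly Kähler manifold; `r` is the symmetric tensor
with `⟨r X, Y⟩ = Σ_i ⟨(∇_{e_i}J)X, (∇_{e_i}J)Y⟩` (its pointwise definition is
replaced by its standard algebraic properties below), `Dbar` the canonical
Hermitian connection.

STATEMENT: Gray's identity
`2⟨(∇_X r)Y, Z⟩ = ⟨r((∇_X J)Y), JZ⟩ + ⟨r(JY), (∇_X J)Z⟩`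
holds for all vector fields `X, Y, Z` if and only if `r` is parallel for the
canonical Hermitian connection, `∇̄ r = 0`.
-/
theorem gray_identity_iff_r_parallel
    (M VF : Type) [AddCommGroup VF] [Module ℝ VF]
    (g : VF →ₗ[ℝ] VF →ₗ[ℝ] (M → ℝ))
    (deriv : VF → (M → ℝ) → (M → ℝ))
    (D : VF → VF → VF)
    (J : VF →ₗ[ℝ] VF)
    (DJ : VF →ₗ[ℝ] VF →ₗ[ℝ] VF)
    (r : VF →ₗ[ℝ] VF)
    (Dbar : VF → VF → VF)
    -- almost Hermitian structure
    (hgsymm : ∀ X Y, g X Y = g Y X)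
    (hnondeg : ∀ X, (∀ Z, g X Z = 0) → X = 0)
    (hJJ : ∀ X, J (J X) = -X)
    (hJskew : ∀ X Y, g (J X) Y = -(g X (J Y)))
    -- the Levi-Civita connection is metric
    (hmetric : ∀ X Y Z, deriv X (g Y Z) = g (D X Y) Z + g Y (D X Z))
    -- `DJ` is the covariant derivative of `J`
    (hDJ : ∀ X Y, DJ X Y = D X (J Y) - J (D X Y))
    -- nearly Kähler condition and standard algebraic properties of ∇J
    (hNK : ∀ X, DJ X X = 0)
    (hAJ : ∀ X Y, DJ X (J Y) = -J (DJ X Y))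
    (hAskew : ∀ X Y Z, g (DJ X Y) Z = -(g (DJ X Z) Y))
    -- algebraic properties of r: symmetric and commuting with J
    (hrsymm : ∀ X Y, g (r X) Y = g X (r Y))
    (hrJ : ∀ X, r (J X) = J (r X))
    -- the canonical Hermitian connection
    (hDbar : ∀ X Y, Dbar X Y = D X Y + (1/2 : ℝ) • DJ X (J Y)) :
    (∀ X Y Z, (2 : ℝ) • g (D X (r Y) - r (D X Y)) Z
        = g (r (DJ X Y)) (J Z) + g (r (J Y)) (DJ X Z))
    ↔ (∀ X Y, Dbar X (r Y) = r (Dbar X Y)) := by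

  have key : ∀ X Y Z, (2 : ℝ) • g (Dbar X (r Y) - r (Dbar X Y)) Z
      = (2 : ℝ) • g (D X (r Y) - r (D X Y)) Z
        - (g (r (DJ X Y)) (J Z) + g (r (J Y)) (DJ X Z)) := by
    intro X Y Z
    have h1 : g (DJ X (J (r Y))) Z = -(g (r (J Y)) (DJ X Z)) := by
      rw [← hrJ, hAskew, hgsymm]
    have h2 : g (r (DJ X (J Y))) Z = g (r (DJ X Y)) (J Z) := by
      rw [hAJ, map_neg, hrJ, map_neg, LinearMap.neg_apply, hJskew, neg_neg]
    rw [hDbar, hDbar]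
    simp only [map_add, map_smul, map_sub, LinearMap.add_apply,
      LinearMap.sub_apply, LinearMap.smul_apply, h1, h2]
    module
  constructor
  · intro hGray X Y
    have h0 : ∀ Z, g (Dbar X (r Y) - r (Dbar X Y)) Z = 0 := by
      intro Z
      have k := key X Y Z
      rw [hGray X Y Z, sub_self] at k
      rcases smul_eq_zero.mp k with h | h
      · exact absurd h (by norm_num)
      · exact h
    have := hnondeg _ h0
    exact sub_eq_zero.mp this
  · intro hPar X Y Z
    have k := key X Y Z
    rw [hPar X Y, sub_self, map_zero, LinearMap.zero_apply, smul_zero] at k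
    exact eq_of_sub_eq_zero k.symm
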